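/- Assume F_S is convex on ℝ^p. Then for every x, x̄ ∈ X, every family y_1, …, y_m ∈ ℝ^d, and every η > 0, γ > 0: (1/(n·m)) ∑_{i=1}^n ∑_{j=1}^m ‖ Π_X( x − η·Dg_j(x)^T ∇f_i(y_j) ) − x̄ ‖² ≤ (1 + C_f·L_g²·η/γ)·‖x − x̄‖² + L_f²·L_g²·η² − 2η·( F_S(x) − F_S(x̄) ) + γ·C_f·η·(1/m) ∑_{j=1}^m ‖ g_S(x) − y_j ‖². -/

import Mathlib

open scoped RealInnerProductSpace

lemma proj_contract' {F : Type*} [NormedAddCommGroup F] [InnerProductSpace ℝ F]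
    {K : Set F} (hK : Convex ℝ K) {z v xb : F} (hv : v ∈ K) (hxb : xb ∈ K)
    (hmin : ∀ w ∈ K, dist v z ≤ dist w z) :
    ‖v - xb‖ ≤ ‖z - xb‖ := by
  have hinner : (⟪z - v, xb - v⟫) ≤ 0 := by
    have h := (norm_eq_iInf_iff_real_inner_le_zero hK hv (u := z)).mp ?_ xb hxb
    · exact h
    · haveI : Nonempty K := ⟨⟨v, hv⟩⟩
      apply le_antisymm
      · exact le_ciInf fun w => by
          simpa [dist_eq_norm, norm_sub_rev] using hmin w w.2
      · have hbdd : BddBelow (Set.range fun w : K => ‖z - ↑w‖) := by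
          refine ⟨0, ?_⟩
          rintro y ⟨w, rfl⟩
          exact norm_nonneg _
        exact ciInf_le hbdd ⟨v, hv⟩
  have h2 := norm_sub_sq_real (z - v) (xb - v)
  have h3 : z - v - (xb - v) = z - xb := by abel
  rw [h3] at h2
  have key : ‖v - xb‖^2 ≤ ‖z - xb‖^2 := by
    rw [norm_sub_rev v xb]
    nlinarith [sq_nonneg ‖z - v‖]
  nlinarith [norm_nonneg (v - xb), norm_nonneg (z - xb)]

lemma convex_grad_ineq' {F : Type*} [NormedAddCommGroup F] [InnerProductSpace ℝ F]
    {f : F → ℝ} (hf : ConvexOn ℝ Set.univ f) {x y : F} {L : F →L[ℝ] ℝ}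
    (hd : HasFDerivAt f L x) : f x + L (y - x) ≤ f y := by
  set φ : ℝ → ℝ := fun t => f (x + t • (y - x)) with hφ
  have hφconv : ConvexOn ℝ Set.univ φ := by
    have := hf.comp_affineMap (AffineMap.lineMap x y)
    replace this : ConvexOn ℝ (⇑(AffineMap.lineMap (k := ℝ) x y) ⁻¹' Set.univ) (f ∘ ⇑(AffineMap.lineMap (k := ℝ) x y)) := this
    have h0 : (AffineMap.lineMap x y ⁻¹' Set.univ : Set ℝ) = Set.univ := Set.preimage_univ
    rw [h0] at this
    convert this using 1
    funext t
    simp [hφ, AffineMap.lineMap_apply_module]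
    ring_nf
    congr 1
    module
  have hline : HasDerivAt (fun t : ℝ => x + t • (y - x)) (y - x) 0 := by
    simpa using ((hasDerivAt_id (0:ℝ)).smul_const (y - x)).const_add x
  have hφd : HasDerivAt φ (L (y - x)) 0 := by
    have hd' : HasFDerivAt f L ((fun t : ℝ => x + t • (y - x)) 0) := by simpa using hd
    simpa [hφ, Function.comp_def] using hd'.comp_hasDerivAt 0 hline
  have hslope : Filter.Tendsto (slope φ 0) (nhdsWithin 0 (Set.Ioi 0)) (nhds (L (y - x))) := by
    have := hasDerivAt_iff_tendsto_slope.mp hφd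
    exact this.mono_left (nhdsWithin_mono 0 (fun t ht => ne_of_gt ht))
  have hbound : ∀ᶠ t in nhdsWithin (0:ℝ) (Set.Ioi 0), slope φ 0 t ≤ φ 1 - φ 0 := by
    filter_upwards [Ioo_mem_nhdsGT_of_mem (by norm_num : (0:ℝ) ∈ Set.Ico 0 1)] with t ht
    have := hφconv.secant_mono (Set.mem_univ (0:ℝ)) (Set.mem_univ t) (Set.mem_univ 1)
      (ne_of_gt ht.1) (by norm_num) (le_of_lt ht.2)
    simp only [slope_def_field] at this ⊢
    simpa [slope, div_eq_mul_inv] using this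
  have hle : L (y - x) ≤ φ 1 - φ 0 := le_of_tendsto hslope hbound
  have h1 : φ 1 = f y := by simp [hφ]
  have h0' : φ 0 = f x := by simp [hφ]
  rw [h1, h0'] at hle
  linarith

set_option maxHeartbeats 2000000 in
theorem stmt_19
    (p d n m : ℕ) (hp : 1 ≤ p) (hd : 1 ≤ d) (hn : 1 ≤ n) (hm : 1 ≤ m)
    (X : Set (EuclideanSpace ℝ (Fin p)))
    (hXne : X.Nonempty) (hXcl : IsClosed X) (hXconv : Convex ℝ X)
    (proj : EuclideanSpace ℝ (Fin p) → EuclideanSpace ℝ (Fin p))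
    (hproj : ∀ z, proj z ∈ X ∧ ∀ w ∈ X, dist (proj z) z ≤ dist w z)
    (f : Fin n → EuclideanSpace ℝ (Fin d) → ℝ)
    (g : Fin m → EuclideanSpace ℝ (Fin p) → EuclideanSpace ℝ (Fin d))
    (Lf Lg Cf : ℝ) (hLf : 0 < Lf) (hLg : 0 < Lg) (hCf : 0 < Cf)
    (hfdiff : ∀ i, Differentiable ℝ (f i))
    (hgdiff : ∀ j, Differentiable ℝ (g j))
    (hflip : ∀ i y₁ y₂, |f i y₁ - f i y₂| ≤ Lf * ‖y₁ - y₂‖)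
    (hgradlip : ∀ i y₁ y₂, ‖gradient (f i) y₁ - gradient (f i) y₂‖ ≤ Cf * ‖y₁ - y₂‖)
    (hglip : ∀ j x₁ x₂, ‖g j x₁ - g j x₂‖ ≤ Lg * ‖x₁ - x₂‖)
    (gS : EuclideanSpace ℝ (Fin p) → EuclideanSpace ℝ (Fin d))
    (hgS : ∀ z, gS z = (m : ℝ)⁻¹ • ∑ j, g j z)
    (FS : EuclideanSpace ℝ (Fin p) → ℝ)
    (hFS : ∀ z, FS z = (n : ℝ)⁻¹ * ∑ i, f i (gS z))
    (hFSconv : ConvexOn ℝ Set.univ FS) :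
    ∀ x ∈ X, ∀ xb ∈ X, ∀ (Y : Fin m → EuclideanSpace ℝ (Fin d)) (η γ : ℝ),
      0 < η → 0 < γ →
      ((n : ℝ) * m)⁻¹ *
          ∑ i, ∑ j,
            ‖proj (x - η • (ContinuousLinearMap.adjoint (fderiv ℝ (g j) x)
                (gradient (f i) (Y j)))) - xb‖ ^ 2 ≤
        (1 + Cf * Lg ^ 2 * η / γ) * ‖x - xb‖ ^ 2 + Lf ^ 2 * Lg ^ 2 * η ^ 2
          - 2 * η * (FS x - FS xb)
          + γ * Cf * η * ((m : ℝ)⁻¹ * ∑ j, ‖gS x - Y j‖ ^ 2) := by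
  intro x hx xb hxb Y η γ hη hγ
  have hn0 : (0:ℝ) < n := by exact_mod_cast hn
  have hm0 : (0:ℝ) < m := by exact_mod_cast hm
  set A : Fin m → _ := fun j => fderiv ℝ (g j) x with hA
  set v : Fin n → Fin m → EuclideanSpace ℝ (Fin p) :=
    fun i j => ContinuousLinearMap.adjoint (A j) (gradient (f i) (Y j)) with hv
  set u : Fin n → Fin m → EuclideanSpace ℝ (Fin p) :=
    fun i j => ContinuousLinearMap.adjoint (A j) (gradient (f i) (gS x)) with hu
  -- norm bounds
  have hAnorm : ∀ j, ‖A j‖ ≤ Lg := by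
    intro j
    have hgLip : LipschitzWith (Real.toNNReal Lg) (g j) :=
      LipschitzWith.of_dist_le_mul fun x₁ x₂ => by
        simpa [dist_eq_norm, Real.coe_toNNReal _ hLg.le] using hglip j x₁ x₂
    have := norm_fderiv_le_of_lipschitz ℝ hgLip (x₀ := x)
    rwa [Real.coe_toNNReal _ hLg.le] at this
  have hgradnorm : ∀ i y, ‖gradient (f i) y‖ ≤ Lf := by
    intro i y
    have hfLip : LipschitzWith (Real.toNNReal Lf) (f i) :=
      LipschitzWith.of_dist_le_mul fun y₁ y₂ => by
        simpa [Real.dist_eq, dist_eq_norm, Real.coe_toNNReal _ hLf.le] using hflip i y₁ y₂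
    have h2 := norm_fderiv_le_of_lipschitz ℝ hfLip (x₀ := y)
    rw [Real.coe_toNNReal _ hLf.le] at h2
    have h1 : ‖gradient (f i) y‖ = ‖fderiv ℝ (f i) y‖ := by
      rw [gradient]; exact LinearIsometryEquiv.norm_map _ _
    rw [h1]; exact h2
  have hadjnorm : ∀ j (z : EuclideanSpace ℝ (Fin d)),
      ‖ContinuousLinearMap.adjoint (A j) z‖ ≤ Lg * ‖z‖ := by
    intro j z
    calc ‖ContinuousLinearMap.adjoint (A j) z‖
        ≤ ‖ContinuousLinearMap.adjoint (A j)‖ * ‖z‖ := (ContinuousLinearMap.adjoint (A j)).le_opNorm z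
      _ ≤ Lg * ‖z‖ := by
          apply mul_le_mul_of_nonneg_right _ (norm_nonneg z)
          rw [LinearIsometryEquiv.norm_map]
          exact hAnorm j
  -- per-term bound
  have key : ∀ (i : Fin n) (j : Fin m),
      ‖proj (x - η • v i j) - xb‖ ^ 2 ≤
        (1 + Cf * Lg ^ 2 * η / γ) * ‖x - xb‖ ^ 2 + Lf ^ 2 * Lg ^ 2 * η ^ 2
          + γ * Cf * η * ‖gS x - Y j‖ ^ 2 - 2 * η * ⟪u i j, x - xb⟫ := by
    intro i j
    have hstep : ‖proj (x - η • v i j) - xb‖ ≤ ‖(x - η • v i j) - xb‖ :=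
      proj_contract' hXconv (hproj _).1 hxb (hproj _).2
    have hsq : ‖proj (x - η • v i j) - xb‖ ^ 2 ≤ ‖(x - η • v i j) - xb‖ ^ 2 :=
      pow_le_pow_left₀ (norm_nonneg _) hstep 2
    have hexp : ‖(x - η • v i j) - xb‖ ^ 2
        = ‖x - xb‖ ^ 2 - 2 * η * ⟪x - xb, v i j⟫ + η ^ 2 * ‖v i j‖ ^ 2 := by
      have h1 : x - η • v i j - xb = (x - xb) - η • v i j := by abel
      rw [h1, norm_sub_sq_real, real_inner_smul_right, norm_smul]
      simp only [Real.norm_eq_abs, mul_pow, sq_abs]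
      ring
    have hvnorm : ‖v i j‖ ≤ Lg * Lf :=
      le_trans (hadjnorm j _) (mul_le_mul_of_nonneg_left (hgradnorm i _) hLg.le)
    have hdiff : ‖u i j - v i j‖ ≤ Lg * (Cf * ‖gS x - Y j‖) := by
      have h1 : u i j - v i j
          = ContinuousLinearMap.adjoint (A j) (gradient (f i) (gS x) - gradient (f i) (Y j)) := by
        rw [map_sub]
      rw [h1]
      exact le_trans (hadjnorm j _)
        (mul_le_mul_of_nonneg_left (hgradlip i _ _) hLg.le)
    have hcs : ⟪x - xb, u i j⟫ - ⟪x - xb, v i j⟫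
        ≤ ‖x - xb‖ * (Lg * (Cf * ‖gS x - Y j‖)) := by
      have h2 : ⟪x - xb, u i j⟫ - ⟪x - xb, v i j⟫ = ⟪x - xb, u i j - v i j⟫ := by
        rw [inner_sub_right]
      rw [h2]
      exact le_trans (real_inner_le_norm _ _)
        (mul_le_mul_of_nonneg_left hdiff (norm_nonneg _))
    have hsym : ⟪u i j, x - xb⟫ = ⟪x - xb, u i j⟫ := real_inner_comm _ _
    have hamgm : 2 * (Lg * (‖gS x - Y j‖ * ‖x - xb‖))
        ≤ Lg ^ 2 * ‖x - xb‖ ^ 2 / γ + γ * ‖gS x - Y j‖ ^ 2 := by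
      rw [div_add' _ _ _ (ne_of_gt hγ), le_div_iff₀ hγ]
      nlinarith [sq_nonneg (Lg * ‖x - xb‖ - γ * ‖gS x - Y j‖)]
    have hamgm2 := mul_le_mul_of_nonneg_left hamgm (by positivity : (0:ℝ) ≤ Cf * η)
    have hv2 : η ^ 2 * ‖v i j‖ ^ 2 ≤ Lf ^ 2 * Lg ^ 2 * η ^ 2 := by
      have hsq2 : ‖v i j‖ ^ 2 ≤ (Lg * Lf) ^ 2 := by
        nlinarith [norm_nonneg (v i j)]
      nlinarith [sq_nonneg η]
    have hcross := mul_le_mul_of_nonneg_left hcs (by positivity : (0:ℝ) ≤ 2 * η)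
    rw [hsym]
    have hdivid : Cf * η * (Lg ^ 2 * ‖x - xb‖ ^ 2 / γ) = Cf * Lg ^ 2 * η / γ * ‖x - xb‖ ^ 2 := by
      ring
    nlinarith [hsq, hexp, hv2, hcross, hamgm2]
  -- derivative of gS
  set B : EuclideanSpace ℝ (Fin p) →L[ℝ] EuclideanSpace ℝ (Fin d) :=
    (m:ℝ)⁻¹ • ∑ j, A j with hB
  have hgSd : HasFDerivAt gS B x := by
    have h1 : HasFDerivAt (fun z => (m:ℝ)⁻¹ • ∑ j, g j z) B x :=
      (HasFDerivAt.fun_sum fun j _ => (hgdiff j x).hasFDerivAt).fun_const_smul _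
    have h2 : gS = fun z => (m:ℝ)⁻¹ • ∑ j, g j z := funext hgS
    rw [h2]
    exact h1
  -- derivative of FS
  set LFi : Fin n → (EuclideanSpace ℝ (Fin d) →L[ℝ] ℝ) :=
    fun i => fderiv ℝ (f i) (gS x) with hLFi
  set LF : EuclideanSpace ℝ (Fin p) →L[ℝ] ℝ := (n:ℝ)⁻¹ • ∑ i, (LFi i).comp B with hLF
  have hFSd : HasFDerivAt FS LF x := by
    have hsum : HasFDerivAt (fun z => ∑ i, f i (gS z)) (∑ i, (LFi i).comp B) x :=
      HasFDerivAt.fun_sum fun i _ => ((hfdiff i (gS x)).hasFDerivAt.comp x hgSd)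
    have h2 : FS = fun z => (n:ℝ)⁻¹ * ∑ i, f i (gS z) := funext hFS
    rw [h2]
    exact hsum.const_mul _
  -- convexity inequality
  have hconv := convex_grad_ineq' hFSconv hFSd (y := xb)
  have hLFsub : LF (xb - x) = - LF (x - xb) := by
    rw [← map_neg]
    congr 1
    abel
  have hgrad_ge : FS x - FS xb ≤ LF (x - xb) := by
    rw [hLFsub] at hconv
    linarith
  -- inner product identity
  have hinnerid : ∀ (i : Fin n) (j : Fin m),
      (⟪u i j, x - xb⟫) = (LFi i) (A j (x - xb)) := by
    intro i j
    rw [ContinuousLinearMap.adjoint_inner_left]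
    exact InnerProductSpace.toDual_symm_apply
  have hsumid : ((n:ℝ) * m)⁻¹ * ∑ i, ∑ j, (⟪u i j, x - xb⟫) = LF (x - xb) := by
    have hLFapp : LF (x - xb)
        = (n:ℝ)⁻¹ * ∑ i, ((m:ℝ)⁻¹ * ∑ j, (LFi i) (A j (x - xb))) := by
      rw [hLF]
      simp only [ContinuousLinearMap.smul_apply, ContinuousLinearMap.coe_sum',
        Finset.sum_apply, ContinuousLinearMap.comp_apply, smul_eq_mul]
      congr 1
      apply Finset.sum_congr rfl
      intro i _
      rw [hB]
      simp only [ContinuousLinearMap.smul_apply, ContinuousLinearMap.coe_sum',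
        Finset.sum_apply, map_smul, map_sum, smul_eq_mul]
    rw [hLFapp, mul_inv, mul_assoc, Finset.mul_sum]
    congr 1
    apply Finset.sum_congr rfl
    intro i _
    congr 1
    apply Finset.sum_congr rfl
    intro j _
    exact hinnerid i j
  -- assemble
  set Cc : ℝ := (1 + Cf * Lg ^ 2 * η / γ) * ‖x - xb‖ ^ 2 + Lf ^ 2 * Lg ^ 2 * η ^ 2 with hCc
  set a : ℝ := ∑ j, ‖gS x - Y j‖ ^ 2 with ha
  set S : ℝ := ∑ i, ∑ j, (⟪u i j, x - xb⟫) with hSdef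
  have hsum1 : ∑ i, ∑ j, ‖proj (x - η • v i j) - xb‖ ^ 2 ≤
      (n:ℝ) * m * Cc + (n:ℝ) * (γ * Cf * η * a) - 2 * η * S := by
    have h1 : ∑ i : Fin n, ∑ j : Fin m, ‖proj (x - η • v i j) - xb‖ ^ 2 ≤
        ∑ i : Fin n, ∑ j : Fin m,
          (Cc + γ * Cf * η * ‖gS x - Y j‖ ^ 2 - 2 * η * (⟪u i j, x - xb⟫)) :=
      Finset.sum_le_sum fun i _ => Finset.sum_le_sum fun j _ => key i j
    refine le_trans h1 (le_of_eq ?_)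
    have e1 : ∀ i : Fin n, ∑ j : Fin m,
        (Cc + γ * Cf * η * ‖gS x - Y j‖ ^ 2 - 2 * η * (⟪u i j, x - xb⟫))
        = (m:ℝ) * Cc + γ * Cf * η * a - 2 * η * ∑ j, (⟪u i j, x - xb⟫) := by
      intro i
      rw [Finset.sum_sub_distrib, Finset.sum_add_distrib, Finset.sum_const, Finset.card_univ,
        Fintype.card_fin, nsmul_eq_mul, ← Finset.mul_sum, ← Finset.mul_sum, ha]
    rw [Finset.sum_congr rfl (fun i _ => e1 i), Finset.sum_sub_distrib, Finset.sum_const,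
      Finset.card_univ, Fintype.card_fin, nsmul_eq_mul, ← Finset.mul_sum, hSdef]
    ring
  have hnm : (0:ℝ) < (n:ℝ) * m := by positivity
  have hmul := mul_le_mul_of_nonneg_left hsum1 (le_of_lt (inv_pos.mpr hnm))
  have heq2 : ((n:ℝ) * m)⁻¹ * ((n:ℝ) * m * Cc + (n:ℝ) * (γ * Cf * η * a) - 2 * η * S)
      = Cc + γ * Cf * η * ((m:ℝ)⁻¹ * a) - 2 * η * (((n:ℝ) * m)⁻¹ * S) := by
    field_simp
  rw [heq2, hsumid] at hmul
  have hfinal : -(2 * η * LF (x - xb)) ≤ -(2 * η * (FS x - FS xb)) := by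
    nlinarith [mul_le_mul_of_nonneg_left hgrad_ge (by positivity : (0:ℝ) ≤ 2 * η)]
  calc ((n:ℝ) * m)⁻¹ * ∑ i, ∑ j, ‖proj (x - η • v i j) - xb‖ ^ 2
      ≤ Cc + γ * Cf * η * ((m:ℝ)⁻¹ * a) - 2 * η * LF (x - xb) := hmul
    _ ≤ Cc + γ * Cf * η * ((m:ℝ)⁻¹ * a) - 2 * η * (FS x - FS xb) := by linarith
    _ = (1 + Cf * Lg ^ 2 * η / γ) * ‖x - xb‖ ^ 2 + Lf ^ 2 * Lg ^ 2 * η ^ 2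
          - 2 * η * (FS x - FS xb)
          + γ * Cf * η * ((m:ℝ)⁻¹ * a) := by rw [hCc]; ring
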